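/- arXiv:1902.05449 — 4 statements merged into one kernel-verified Lean document; each statement's English description precedes it below -/
import Mathlib

section
/- For f(x,u,p,q) = 3q²/(2p) with p ≠ 0, the Wünschmann relative invariant I₁ = 4f_q³ + 18f_q(f_p − D_x f_q) + 9D_x²f_q − 27D_x f_p + 54f_u vanishes identically, where D_x = ∂_x + p∂_u + q∂_p + f∂_q is the total derivative operator along solutions of u''' = f. -/
noncomputable section

/-- partial derivative in the first variable `x` -/
def pX (g : ℝ → ℝ → ℝ → ℝ → ℝ) (x u p q : ℝ) : ℝ := deriv (fun t => g t u p q) x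
/-- partial derivative in the second variable `u` -/
def pU (g : ℝ → ℝ → ℝ → ℝ → ℝ) (x u p q : ℝ) : ℝ := deriv (fun t => g x t p q) u
/-- partial derivative in the third variable `p` -/
def pP (g : ℝ → ℝ → ℝ → ℝ → ℝ) (x u p q : ℝ) : ℝ := deriv (fun t => g x u t q) p
/-- partial derivative in the fourth variable `q` -/
def pQ (g : ℝ → ℝ → ℝ → ℝ → ℝ) (x u p q : ℝ) : ℝ := deriv (fun t => g x u p t) q

/-- total derivative operator `D_x = ∂_x + p ∂_u + q ∂_p + f ∂_q` -/
def Dx (f g : ℝ → ℝ → ℝ → ℝ → ℝ) (x u p q : ℝ) : ℝ :=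
  pX g x u p q + p * pU g x u p q + q * pP g x u p q + f x u p q * pQ g x u p q

/-- the Wünschmann relative invariant -/
def I1 (f : ℝ → ℝ → ℝ → ℝ → ℝ) (x u p q : ℝ) : ℝ :=
  4 * (pQ f x u p q) ^ 3 + 18 * pQ f x u p q * (pP f x u p q - Dx f (pQ f) x u p q)
    + 9 * Dx f (Dx f (pQ f)) x u p q - 27 * Dx f (pP f) x u p q + 54 * pU f x u p q

def Ff : ℝ → ℝ → ℝ → ℝ → ℝ := fun _ _ p q => 3 * q ^ 2 / (2 * p)

lemma hQ (x u p q : ℝ) (hp : p ≠ 0) : pQ Ff x u p q = 3 * q / p := by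
  have h : HasDerivAt (fun t : ℝ => 3 * t ^ 2 / (2 * p)) (3 * (2 * q ^ 1) / (2 * p)) q :=
    ((hasDerivAt_pow 2 q).const_mul 3).div_const (2 * p)
  simp only [pQ, Ff]; rw [h.deriv]
  field_simp

lemma hP (x u p q : ℝ) (hp : p ≠ 0) : pP Ff x u p q = -(3 * q ^ 2) / (2 * p ^ 2) := by
  have h : HasDerivAt (fun t : ℝ => 3 * q ^ 2 / (2 * t))
      (-(3 * q ^ 2 * 2) / (2 * p) ^ 2) p := by
    have := (((hasDerivAt_id p).const_mul 2).inv (by simpa using hp)).const_mul (3 * q ^ 2)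
    simpa [div_eq_mul_inv, mul_comm, mul_assoc, mul_left_comm, neg_div] using this
  simp only [pP, Ff]; rw [h.deriv]
  field_simp

lemma hC (x u p q : ℝ) (hp : p ≠ 0) : Dx Ff (pQ Ff) x u p q = 3 * q ^ 2 / (2 * p ^ 2) := by
  have hx : pX (pQ Ff) x u p q = 0 := by
    simp [pX, pQ, Ff]
  have hu : pU (pQ Ff) x u p q = 0 := by
    simp [pU, pQ, Ff]
  have hpp : pP (pQ Ff) x u p q = 3 * q * (-(p ^ 2)⁻¹) := by
    rw [pP]
    have heq : (fun t => pQ Ff x u t q) =ᶠ[nhds p] fun t => 3 * q * t⁻¹ := by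
      filter_upwards [eventually_ne_nhds hp] with t ht
      rw [hQ x u t q ht]; ring
    rw [heq.deriv_eq, ((hasDerivAt_inv hp).const_mul (3 * q)).deriv]
  have hq : pQ (pQ Ff) x u p q = 3 / p := by
    rw [pQ]
    have heq : (fun t => pQ Ff x u p t) = fun t => 3 * t / p :=
      funext fun t => hQ x u p t hp
    rw [heq]
    have h : HasDerivAt (fun t : ℝ => 3 * t / p) (3 * 1 / p) q :=
      ((hasDerivAt_id q).const_mul 3).div_const p
    rw [h.deriv]; ring
  rw [Dx, hx, hu, hpp, hq]
  show 0 + p * 0 + q * (3 * q * (-(p ^ 2)⁻¹)) + 3 * q ^ 2 / (2 * p) * (3 / p) = _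
  field_simp; ring

lemma hDB (x u p q : ℝ) (hp : p ≠ 0) : Dx Ff (pP Ff) x u p q = -(3 * q ^ 3) / (2 * p ^ 3) := by
  have hx : pX (pP Ff) x u p q = 0 := by simp [pX, pP, Ff]
  have hu : pU (pP Ff) x u p q = 0 := by simp [pU, pP, Ff]
  have hpp : pP (pP Ff) x u p q = 3 * q ^ 2 / p ^ 3 := by
    rw [pP]
    have heq : (fun t => pP Ff x u t q) =ᶠ[nhds p] fun t => -(3 * q ^ 2 / 2) * (t ^ 2)⁻¹ := by
      filter_upwards [eventually_ne_nhds hp] with t ht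
      rw [hP x u t q ht]; field_simp
    rw [heq.deriv_eq,
      (show HasDerivAt (fun t => -(3 * q ^ 2 / 2) * (t ^ 2)⁻¹) _ p from
        ((hasDerivAt_pow 2 p).inv (pow_ne_zero 2 hp)).const_mul (-(3 * q ^ 2 / 2))).deriv]
    field_simp; ring
  have hq : pQ (pP Ff) x u p q = -(3 * q) / p ^ 2 := by
    rw [pQ]
    have heq : (fun t => pP Ff x u p t) = fun t => (-3 / (2 * p ^ 2)) * t ^ 2 := by
      funext t; rw [hP x u p t hp]; field_simp
    rw [heq, ((hasDerivAt_pow 2 q).const_mul (-3 / (2 * p ^ 2))).deriv]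
    field_simp; ring
  rw [Dx, hx, hu, hpp, hq]
  show 0 + p * 0 + q * (3 * q ^ 2 / p ^ 3) + 3 * q ^ 2 / (2 * p) * (-(3 * q) / p ^ 2) = _
  field_simp; ring

lemma hDC (x u p q : ℝ) (hp : p ≠ 0) :
    Dx Ff (Dx Ff (pQ Ff)) x u p q = 3 * q ^ 3 / (2 * p ^ 3) := by
  have hx : pX (Dx Ff (pQ Ff)) x u p q = 0 := by
    simp [pX, Dx, pU, pP, pQ, Ff]
  have hu : pU (Dx Ff (pQ Ff)) x u p q = 0 := by
    simp [pU, Dx, pX, pP, pQ, Ff]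
  have hpp : pP (Dx Ff (pQ Ff)) x u p q = -(3 * q ^ 2) / p ^ 3 := by
    rw [pP]
    have heq : (fun t => Dx Ff (pQ Ff) x u t q) =ᶠ[nhds p]
        fun t => (3 * q ^ 2 / 2) * (t ^ 2)⁻¹ := by
      filter_upwards [eventually_ne_nhds hp] with t ht
      rw [hC x u t q ht]; field_simp
    rw [heq.deriv_eq,
      (show HasDerivAt (fun t => 3 * q ^ 2 / 2 * (t ^ 2)⁻¹) _ p from
        ((hasDerivAt_pow 2 p).inv (pow_ne_zero 2 hp)).const_mul (3 * q ^ 2 / 2)).deriv]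
    field_simp; ring
  have hq : pQ (Dx Ff (pQ Ff)) x u p q = 3 * q / p ^ 2 := by
    rw [pQ]
    have heq : (fun t => Dx Ff (pQ Ff) x u p t) = fun t => (3 / (2 * p ^ 2)) * t ^ 2 := by
      funext t; rw [hC x u p t hp]; field_simp
    rw [heq, ((hasDerivAt_pow 2 q).const_mul (3 / (2 * p ^ 2))).deriv]
    field_simp; ring
  rw [Dx, hx, hu, hpp, hq]
  show 0 + p * 0 + q * (-(3 * q ^ 2) / p ^ 3) + 3 * q ^ 2 / (2 * p) * (3 * q / p ^ 2) = _
  field_simp; ring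

lemma hUF (x u p q : ℝ) : pU Ff x u p q = 0 := by simp [pU, Ff]

theorem stmt_1 :
    ∀ x u p q : ℝ, p ≠ 0 →
      I1 (fun _ _ p q => 3 * q ^ 2 / (2 * p)) x u p q = 0 := by
  intro x u p q hp
  show I1 Ff x u p q = 0
  rw [I1, hQ x u p q hp, hP x u p q hp, hC x u p q hp, hDC x u p q hp,
    hDB x u p q hp, hUF]
  field_simp; ring
end
end

section
/- Suppose u : I → ℝ is smooth on an open interval I and satisfies (k₁x + k₂)² + (k₁u(x) + k₃)² = 1 for all x ∈ I, for constants k₁ ≠ 0, k₂, k₃, and suppose k₁u(x) + k₃ ≠ 0 on I. Then u satisfies the ODE u''' = 3u'(u'')²/(1 + (u')²) on I. -/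
theorem stmt_8 (I : Set ℝ) (hI : IsOpen I) (hI' : I.OrdConnected)
    (u : ℝ → ℝ) (hu : ContDiffOn ℝ (⊤ : ℕ∞) u I)
    (k₁ k₂ k₃ : ℝ) (hk₁ : k₁ ≠ 0)
    (hcirc : ∀ x ∈ I, (k₁ * x + k₂) ^ 2 + (k₁ * u x + k₃) ^ 2 = 1)
    (hne : ∀ x ∈ I, k₁ * u x + k₃ ≠ 0) :
    ∀ x ∈ I, iteratedDeriv 3 u x =
      3 * deriv u x * (iteratedDeriv 2 u x) ^ 2 / (1 + (deriv u x) ^ 2) := by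
  have hu1 : ContDiffOn ℝ (⊤ : ℕ∞) (deriv u) I :=
    hu.deriv_of_isOpen hI (by exact_mod_cast le_top)
  have hu2 : ContDiffOn ℝ (⊤ : ℕ∞) (deriv (deriv u)) I :=
    hu1.deriv_of_isOpen hI (by exact_mod_cast le_top)
  have hdu : ∀ x ∈ I, HasDerivAt u (deriv u x) x := fun x hx =>
    ((hu.contDiffAt (hI.mem_nhds hx)).differentiableAt (by simp)).hasDerivAt
  have hdu1 : ∀ x ∈ I, HasDerivAt (deriv u) (deriv (deriv u) x) x := fun x hx =>
    ((hu1.contDiffAt (hI.mem_nhds hx)).differentiableAt (by simp)).hasDerivAt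
  have hdu2 : ∀ x ∈ I, HasDerivAt (deriv (deriv u)) (deriv (deriv (deriv u)) x) x := fun x hx =>
    ((hu2.contDiffAt (hI.mem_nhds hx)).differentiableAt (by simp)).hasDerivAt
  have key : ∀ (g : ℝ → ℝ) (D : ℝ) (x : ℝ), x ∈ I → (∀ y ∈ I, g y = 0) →
      HasDerivAt g D x → D = 0 := by
    intro g D x hx hg0 hD
    have hev : g =ᶠ[nhds x] (fun _ => (0:ℝ)) :=
      Filter.eventuallyEq_of_mem (hI.mem_nhds hx) hg0
    have : deriv g x = deriv (fun _ => (0:ℝ)) x := hev.deriv_eq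
    rw [hD.deriv, deriv_const] at this
    exact this
  have hA : ∀ x ∈ I, (k₁ * x + k₂) + deriv u x * (k₁ * u x + k₃) = 0 := by
    intro x hx
    have hF := (((((hasDerivAt_id x).const_mul k₁).add_const k₂).pow 2).add
        ((((hdu x hx).const_mul k₁).add_const k₃).pow 2)).sub_const 1
    have h0 := key _ _ x hx (fun y hy => by simp [hcirc y hy]) hF
    simp only [id] at h0
    push_cast at h0
    have hq : 2 * k₁ * ((k₁ * x + k₂) + deriv u x * (k₁ * u x + k₃)) = 0 := by
      linear_combination h0
    exact (mul_eq_zero.mp hq).resolve_left (mul_ne_zero two_ne_zero hk₁)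
  have hB : ∀ x ∈ I, deriv (deriv u) x * (k₁ * u x + k₃) + k₁ * (1 + (deriv u x) ^ 2) = 0 := by
    intro x hx
    have hG := ((((hasDerivAt_id x).const_mul k₁).add_const k₂).add
        ((hdu1 x hx).mul (((hdu x hx).const_mul k₁).add_const k₃)))
    have h0 := key _ _ x hx hA hG
    push_cast at h0
    linear_combination h0
  have hC : ∀ x ∈ I, deriv (deriv (deriv u)) x * (k₁ * u x + k₃)
      + 3 * k₁ * deriv u x * deriv (deriv u) x = 0 := by
    intro x hx
    have hH := (((hdu2 x hx).mul (((hdu x hx).const_mul k₁).add_const k₃)).add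
        (((hasDerivAt_const x (1:ℝ)).add ((hdu1 x hx).pow 2)).const_mul k₁))
    have h0 := key _ _ x hx hB hH
    push_cast at h0
    linear_combination h0
  intro x hx
  have hv := hne x hx
  have hb := hB x hx
  have hc := hC x hx
  have hp : (0:ℝ) < 1 + (deriv u x) ^ 2 := by positivity
  have h2 : iteratedDeriv 2 u x = deriv (deriv u) x := by
    rw [iteratedDeriv_succ, iteratedDeriv_one]
  have h3 : iteratedDeriv 3 u x = deriv (deriv (deriv u)) x := by
    rw [iteratedDeriv_succ, iteratedDeriv_succ, iteratedDeriv_one]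
  rw [h2, h3]
  set u1 := deriv u x
  set u2 := deriv (deriv u) x
  set u3 := deriv (deriv (deriv u)) x
  set v := k₁ * u x + k₃
  have hmain : u3 * v ^ 2 * (1 + u1 ^ 2) = 3 * u1 * u2 ^ 2 * v ^ 2 := by
    linear_combination (v * (1 + u1 ^ 2)) * hc - (3 * u1 * u2 * v) * hb
  have hv2 : (v ^ 2 : ℝ) ≠ 0 := pow_ne_zero 2 hv
  have hkey : u3 * (1 + u1 ^ 2) = 3 * u1 * u2 ^ 2 := by
    apply mul_right_cancel₀ hv2
    linear_combination hmain
  field_simp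
  linear_combination hkey
end

section
/- Define x̄(x) = 2√(u'(x)), ū(x) = u(x) − u'(x)·x, p̄(x) = −x√(u'(x)) along a smooth function u with u' > 0 and u'' ≠ 0. If ū, viewed as a function of x̄ (via the invertible change of variable x ↦ x̄(x)), satisfies d³ū/dx̄³ = 0, then u satisfies u''' = 3(u'')²/(2u'). -/
theorem stmt_14 (I : Set ℝ) (hI : IsOpen I) (hI' : I.OrdConnected)
    (u : ℝ → ℝ) (hu : ContDiffOn ℝ (⊤ : ℕ∞) u I)
    (hp : ∀ x ∈ I, 0 < deriv u x) (hq : ∀ x ∈ I, iteratedDeriv 2 u x ≠ 0)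
    (v : ℝ → ℝ) (hv : ContDiff ℝ (⊤ : ℕ∞) v)
    (hcomp : ∀ x ∈ I, v (2 * Real.sqrt (deriv u x)) = u x - deriv u x * x)
    (h3 : ∀ x ∈ I, iteratedDeriv 3 v (2 * Real.sqrt (deriv u x)) = 0) :
    ∀ x ∈ I, iteratedDeriv 3 u x = 3 * (iteratedDeriv 2 u x) ^ 2 / (2 * deriv u x) := by
  set f := deriv u with hf
  set g := deriv f with hg
  set k := deriv g with hk
  -- smoothness of derivatives on I
  have hfC : ContDiffOn ℝ (⊤ : ℕ∞) f I := hu.deriv_of_isOpen hI (by exact_mod_cast le_top)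
  have hgC : ContDiffOn ℝ (⊤ : ℕ∞) g I := hfC.deriv_of_isOpen hI (by exact_mod_cast le_top)
  have hq' : ∀ x ∈ I, g x ≠ 0 := by
    intro x hx
    have := hq x hx
    simpa [iteratedDeriv_succ, iteratedDeriv_one, hg, hf] using this
  -- basic HasDerivAt facts
  have hdf : ∀ x ∈ I, HasDerivAt u (f x) x := fun x hx =>
    ((hu.contDiffAt (hI.mem_nhds hx)).differentiableAt (by simp)).hasDerivAt
  have hdg : ∀ x ∈ I, HasDerivAt f (g x) x := fun x hx =>
    ((hfC.contDiffAt (hI.mem_nhds hx)).differentiableAt (by simp)).hasDerivAt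
  have hdk : ∀ x ∈ I, HasDerivAt g (k x) x := fun x hx =>
    ((hgC.contDiffAt (hI.mem_nhds hx)).differentiableAt (by simp)).hasDerivAt
  -- derivative of s x = 2 * sqrt (f x)
  have hds : ∀ x ∈ I, HasDerivAt (fun y => 2 * Real.sqrt (f y))
      (g x / Real.sqrt (f x)) x := by
    intro x hx
    have hfx := hp x hx
    have h1 : HasDerivAt (fun y => Real.sqrt (f y))
        (1 / (2 * Real.sqrt (f x)) * g x) x :=
      (Real.hasDerivAt_sqrt (ne_of_gt hfx)).comp x (hdg x hx)
    have h2 := h1.const_mul 2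
    convert h2 using 1
    · rfl
    · rfl
    have hs : Real.sqrt (f x) ≠ 0 := by positivity
    ring
  -- derivatives of v
  have hv1 : Differentiable ℝ v := hv.differentiable (by simp)
  have hv' : ContDiff ℝ (⊤ : ℕ∞) (deriv v) := (contDiff_infty_iff_deriv.mp (by exact_mod_cast hv)).2
  have hv2 : Differentiable ℝ (deriv v) := hv'.differentiable (by simp)
  have hv'' : ContDiff ℝ (⊤ : ℕ∞) (deriv (deriv v)) := (contDiff_infty_iff_deriv.mp hv').2
  have hv3 : Differentiable ℝ (deriv (deriv v)) := hv''.differentiable (by simp)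
  -- Step 1 : deriv v (2 √(f x)) = -x * √(f x)
  have claim1 : ∀ x ∈ I, deriv v (2 * Real.sqrt (f x)) = -x * Real.sqrt (f x) := by
    intro x hx
    have hfx := hp x hx
    have hgx := hq' x hx
    have hsq : Real.sqrt (f x) ≠ 0 := by positivity
    have hL : HasDerivAt (fun y => v (2 * Real.sqrt (f y)))
        (deriv v (2 * Real.sqrt (f x)) * (g x / Real.sqrt (f x))) x :=
      ((hv1 _).hasDerivAt).comp x (hds x hx)
    have hR : HasDerivAt (fun y => u y - f y * y) (f x - (g x * x + f x * 1)) x :=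
      (hdf x hx).sub ((hdg x hx).mul (hasDerivAt_id x))
    have heq : (fun y => v (2 * Real.sqrt (f y))) =ᶠ[nhds x] (fun y => u y - f y * y) :=
      Filter.eventuallyEq_of_mem (hI.mem_nhds hx) (fun y hy => hcomp y hy)
    have hL' : HasDerivAt (fun y => v (2 * Real.sqrt (f y)))
        (f x - (g x * x + f x * 1)) x := hR.congr_of_eventuallyEq heq
    have huniq := hL.unique hL'
    have h2 : deriv v (2 * Real.sqrt (f x)) * g x = -x * Real.sqrt (f x) * g x := by
      have hsq2 : Real.sqrt (f x) * Real.sqrt (f x) = f x := Real.mul_self_sqrt hfx.le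
      field_simp at huniq
      nlinarith [huniq]
    exact mul_right_cancel₀ hgx h2
  -- Step 2 : deriv (deriv v) (2 √(f x)) = -(f x)/(g x) - x/2
  have claim2 : ∀ x ∈ I, deriv (deriv v) (2 * Real.sqrt (f x)) = -(f x) / g x - x / 2 := by
    intro x hx
    have hfx := hp x hx
    have hgx := hq' x hx
    have hsq : Real.sqrt (f x) ≠ 0 := by positivity
    have hsq2 : Real.sqrt (f x) * Real.sqrt (f x) = f x := Real.mul_self_sqrt hfx.le
    have hL : HasDerivAt (fun y => deriv v (2 * Real.sqrt (f y)))
        (deriv (deriv v) (2 * Real.sqrt (f x)) * (g x / Real.sqrt (f x))) x :=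
      ((hv2 _).hasDerivAt).comp x (hds x hx)
    have hsr : HasDerivAt (fun y => Real.sqrt (f y))
        (1 / (2 * Real.sqrt (f x)) * g x) x :=
      (Real.hasDerivAt_sqrt (ne_of_gt hfx)).comp x (hdg x hx)
    have hR : HasDerivAt (fun y => -y * Real.sqrt (f y))
        (-1 * Real.sqrt (f x) + -x * (1 / (2 * Real.sqrt (f x)) * g x)) x :=
      ((hasDerivAt_id x).neg).mul hsr
    have heq : (fun y => deriv v (2 * Real.sqrt (f y))) =ᶠ[nhds x]
        (fun y => -y * Real.sqrt (f y)) :=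
      Filter.eventuallyEq_of_mem (hI.mem_nhds hx) (fun y hy => claim1 y hy)
    have hL' : HasDerivAt (fun y => deriv v (2 * Real.sqrt (f y)))
        (-1 * Real.sqrt (f x) + -x * (1 / (2 * Real.sqrt (f x)) * g x)) x :=
      hR.congr_of_eventuallyEq heq
    have huniq := hL.unique hL'
    field_simp at huniq
    have h7 : (deriv (deriv v) (2 * Real.sqrt (f x)) * g x * 2 -
        (-(2 * f x) - x * g x)) * Real.sqrt (f x) = 0 := by
      linear_combination Real.sqrt (f x) * huniq - 2 * Real.sqrt (f x) * hsq2
    have h6 : deriv (deriv v) (2 * Real.sqrt (f x)) * g x * 2 = -(2 * f x) - x * g x := by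
      rcases mul_eq_zero.mp h7 with h | h
      · linarith
      · exact absurd h hsq
    field_simp
    linarith [h6]
  -- Step 3
  intro x hx
  have hfx := hp x hx
  have hgx := hq' x hx
  have hsq : Real.sqrt (f x) ≠ 0 := by positivity
  have hL : HasDerivAt (fun y => deriv (deriv v) (2 * Real.sqrt (f y)))
      (deriv (deriv (deriv v)) (2 * Real.sqrt (f x)) * (g x / Real.sqrt (f x))) x :=
    ((hv3 _).hasDerivAt).comp x (hds x hx)
  have hRdiv : HasDerivAt (fun y => -(f y) / g y)
      ((-(g x) * g x - -(f x) * k x) / (g x) ^ 2) x :=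
    ((hdg x hx).neg).div (hdk x hx) hgx
  have hR : HasDerivAt (fun y => -(f y) / g y - y / 2)
      ((-(g x) * g x - -(f x) * k x) / (g x) ^ 2 - 1 / 2) x := by
    have := hRdiv.sub ((hasDerivAt_id x).div_const 2)
    exact this
  have heq : (fun y => deriv (deriv v) (2 * Real.sqrt (f y))) =ᶠ[nhds x]
      (fun y => -(f y) / g y - y / 2) :=
    Filter.eventuallyEq_of_mem (hI.mem_nhds hx) (fun y hy => claim2 y hy)
  have hL' : HasDerivAt (fun y => deriv (deriv v) (2 * Real.sqrt (f y)))
      ((-(g x) * g x - -(f x) * k x) / (g x) ^ 2 - 1 / 2) x :=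
    hR.congr_of_eventuallyEq heq
  have huniq := hL.unique hL'
  have hzero : deriv (deriv (deriv v)) (2 * Real.sqrt (f x)) = 0 := by
    have := h3 x hx
    simpa [iteratedDeriv_succ, iteratedDeriv_one, hf] using this
  rw [hzero] at huniq
  have hmain : (-(g x) * g x - -(f x) * k x) / (g x) ^ 2 - 1 / 2 = 0 := by
    linarith [huniq.symm, (zero_mul (g x / Real.sqrt (f x)))]
  have hk3 : k x = 3 * (g x) ^ 2 / (2 * f x) := by
    have hg2 : (g x) ^ 2 ≠ 0 := pow_ne_zero _ hgx
    field_simp at hmain ⊢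
    nlinarith [hmain]
  have h2u : iteratedDeriv 2 u x = g x := by
    simp [iteratedDeriv_succ, iteratedDeriv_one, hg, hf]
  have h3u : iteratedDeriv 3 u x = k x := by
    simp [iteratedDeriv_succ, iteratedDeriv_one, hk, hg, hf]
  rw [h2u, h3u, hk3, hf]
end

section
/- Define x̄(x) = u'(x) + √(1+u'(x)²), ū(x) = (u(x) − x·u'(x))·x̄(x) along a smooth u with u'' ≠ 0. If ū as a function of x̄ satisfies d³ū/dx̄³ = 0, then u satisfies u''' = 3u'(u'')²/(1+(u')²). -/
theorem stmt_15 (I : Set ℝ) (hI : IsOpen I) (hI' : I.OrdConnected)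
    (u : ℝ → ℝ) (hu : ContDiffOn ℝ (⊤ : ℕ∞) u I)
    (hq : ∀ x ∈ I, iteratedDeriv 2 u x ≠ 0)
    (v : ℝ → ℝ) (hv : ContDiff ℝ (⊤ : ℕ∞) v)
    (hcomp : ∀ x ∈ I,
      v (deriv u x + Real.sqrt (1 + (deriv u x) ^ 2)) =
        (u x - x * deriv u x) * (deriv u x + Real.sqrt (1 + (deriv u x) ^ 2)))
    (h3 : ∀ x ∈ I, iteratedDeriv 3 v (deriv u x + Real.sqrt (1 + (deriv u x) ^ 2)) = 0) :
    ∀ x ∈ I, iteratedDeriv 3 u x =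
      3 * deriv u x * (iteratedDeriv 2 u x) ^ 2 / (1 + (deriv u x) ^ 2) := by
  have h1top : (1 : WithTop ℕ∞) ≤ ((⊤ : ℕ∞) : WithTop ℕ∞) := by exact_mod_cast le_top
  have h1top' : ((⊤ : ℕ∞) : WithTop ℕ∞) ≠ 0 := by simp
  set p : ℝ → ℝ := deriv u with hp_def
  set q : ℝ → ℝ := deriv p with hq_def
  have hpC : ContDiffOn ℝ (⊤ : ℕ∞) p I := ((contDiffOn_infty_iff_deriv_of_isOpen hI).mp hu).2
  have hqC : ContDiffOn ℝ (⊤ : ℕ∞) q I := ((contDiffOn_infty_iff_deriv_of_isOpen hI).mp hpC).2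
  have hu_at : ∀ x ∈ I, HasDerivAt u (p x) x := fun x hx =>
    ((hu.differentiableOn h1top').differentiableAt (hI.mem_nhds hx)).hasDerivAt
  have hp_at : ∀ x ∈ I, HasDerivAt p (q x) x := fun x hx =>
    ((hpC.differentiableOn h1top').differentiableAt (hI.mem_nhds hx)).hasDerivAt
  have hq_at : ∀ x ∈ I, HasDerivAt q (deriv q x) x := fun x hx =>
    ((hqC.differentiableOn h1top').differentiableAt (hI.mem_nhds hx)).hasDerivAt
  have hwC : ContDiff ℝ (⊤ : ℕ∞) (deriv v) := by simpa using hv.iterate_deriv 1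
  have hw2C : ContDiff ℝ (⊤ : ℕ∞) (deriv (deriv v)) := by simpa using hwC.iterate_deriv 1
  have h1p : ∀ x : ℝ, (0:ℝ) < 1 + p x ^ 2 := fun x => by positivity
  have hs_pos : ∀ x : ℝ, 0 < Real.sqrt (1 + p x ^ 2) := fun x => Real.sqrt_pos.mpr (h1p x)
  have hs_sq : ∀ x : ℝ, Real.sqrt (1 + p x ^ 2) ^ 2 = 1 + p x ^ 2 := fun x =>
    Real.sq_sqrt (h1p x).le
  have hg_pos : ∀ x : ℝ, 0 < p x + Real.sqrt (1 + p x ^ 2) := by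
    intro x
    have h1 : |p x| < Real.sqrt (1 + p x ^ 2) := by
      rw [← Real.sqrt_sq_eq_abs]
      exact Real.sqrt_lt_sqrt (by positivity) (by linarith)
    have h2 := neg_abs_le (p x)
    linarith
  have hqne : ∀ x ∈ I, q x ≠ 0 := by
    intro x hx
    have h := hq x hx
    rwa [iteratedDeriv_succ, iteratedDeriv_one] at h
  have hs_at : ∀ x ∈ I, HasDerivAt (fun y => Real.sqrt (1 + p y ^ 2))
      (p x * q x / Real.sqrt (1 + p x ^ 2)) x := by
    intro x hx
    have h0 : HasDerivAt (fun y => 1 + p y ^ 2) (2 * p x ^ 1 * q x) x :=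
      ((hp_at x hx).pow 2).const_add 1
    have h1 := h0.sqrt (h1p x).ne'
    convert h1 using 1
    field_simp
  have hg_at : ∀ x ∈ I, HasDerivAt (fun y => p y + Real.sqrt (1 + p y ^ 2))
      (q x + p x * q x / Real.sqrt (1 + p x ^ 2)) x := fun x hx =>
    (hp_at x hx).add (hs_at x hx)
  -- Step A
  have hA : ∀ x ∈ I, deriv v (p x + Real.sqrt (1 + p x ^ 2)) =
      u x - x * p x - x * Real.sqrt (1 + p x ^ 2) := by
    intro x hx
    set s := Real.sqrt (1 + p x ^ 2) with hs_def
    have hsne : s ≠ 0 := (hs_pos x).ne'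
    have hEq : (fun y => v (p y + Real.sqrt (1 + p y ^ 2))) =ᶠ[nhds x]
        (fun y => (u y - y * p y) * (p y + Real.sqrt (1 + p y ^ 2))) :=
      Filter.eventuallyEq_of_mem (hI.mem_nhds hx) (fun y hy => hcomp y hy)
    have hL : HasDerivAt (fun y => v (p y + Real.sqrt (1 + p y ^ 2)))
        (deriv v (p x + s) * (q x + p x * q x / s)) x :=
      ((hv.differentiable h1top' (p x + s)).hasDerivAt).comp x (hg_at x hx)
    have hR : HasDerivAt (fun y => (u y - y * p y) * (p y + Real.sqrt (1 + p y ^ 2)))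
        ((p x - (1 * p x + x * q x)) * (p x + s)
          + (u x - x * p x) * (q x + p x * q x / s)) x :=
      ((hu_at x hx).sub ((hasDerivAt_id x).mul (hp_at x hx))).mul (hg_at x hx)
    have key : deriv v (p x + s) * (q x + p x * q x / s)
        = (p x - (1 * p x + x * q x)) * (p x + s)
          + (u x - x * p x) * (q x + p x * q x / s) := by
      rw [← hL.deriv, ← hR.deriv]; exact hEq.deriv_eq
    have hD : q x + p x * q x / s = q x * (p x + s) / s := by field_simp; ring
    have hDne : q x * (p x + s) / s ≠ 0 :=
      div_ne_zero (mul_ne_zero (hqne x hx) (hg_pos x).ne') hsne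
    rw [hD] at key
    refine mul_right_cancel₀ hDne (key.trans ?_)
    field_simp
    ring
  -- Step B
  have hB : ∀ x ∈ I, deriv (deriv v) (p x + Real.sqrt (1 + p x ^ 2)) *
      (q x * (p x + Real.sqrt (1 + p x ^ 2))) =
      -(x * q x * (p x + Real.sqrt (1 + p x ^ 2))) - (1 + p x ^ 2) := by
    intro x hx
    set s := Real.sqrt (1 + p x ^ 2) with hs_def
    have hsne : s ≠ 0 := (hs_pos x).ne'
    have hs2 : s ^ 2 = 1 + p x ^ 2 := hs_sq x
    have hEq : (fun y => deriv v (p y + Real.sqrt (1 + p y ^ 2))) =ᶠ[nhds x]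
        (fun y => u y - y * p y - y * Real.sqrt (1 + p y ^ 2)) :=
      Filter.eventuallyEq_of_mem (hI.mem_nhds hx) (fun y hy => hA y hy)
    have hL : HasDerivAt (fun y => deriv v (p y + Real.sqrt (1 + p y ^ 2)))
        (deriv (deriv v) (p x + s) * (q x + p x * q x / s)) x :=
      by have h := ((hwC.differentiable h1top' (p x + s)).hasDerivAt).comp x (hg_at x hx); exact h
    have hR : HasDerivAt (fun y => u y - y * p y - y * Real.sqrt (1 + p y ^ 2))
        (p x - (1 * p x + x * q x) - (1 * s + x * (p x * q x / s))) x :=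
      (((hu_at x hx).sub ((hasDerivAt_id x).mul (hp_at x hx)))).sub
        ((hasDerivAt_id x).mul (hs_at x hx))
    have key : deriv (deriv v) (p x + s) * (q x + p x * q x / s)
        = p x - (1 * p x + x * q x) - (1 * s + x * (p x * q x / s)) := by
      rw [← hL.deriv, ← hR.deriv]; exact hEq.deriv_eq
    have key2 := congrArg (fun t => t * s) key
    rw [← hs2]
    field_simp at key2
    linear_combination key2
  -- Step C
  intro x hx
  set s := Real.sqrt (1 + p x ^ 2) with hs_def
  have hsne : s ≠ 0 := (hs_pos x).ne'
  have hs2 : s ^ 2 = 1 + p x ^ 2 := hs_sq x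
  have hgne : p x + s ≠ 0 := (hg_pos x).ne'
  have hqx : q x ≠ 0 := hqne x hx
  have hw3 : deriv (deriv (deriv v)) (p x + s) = 0 := by
    have h := h3 x hx
    rwa [iteratedDeriv_succ, iteratedDeriv_succ, iteratedDeriv_one] at h
  have hEq : (fun y => deriv (deriv v) (p y + Real.sqrt (1 + p y ^ 2)) *
      (q y * (p y + Real.sqrt (1 + p y ^ 2)))) =ᶠ[nhds x]
      (fun y => -(y * q y * (p y + Real.sqrt (1 + p y ^ 2))) - (1 + p y ^ 2)) :=
    Filter.eventuallyEq_of_mem (hI.mem_nhds hx) (fun y hy => hB y hy)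
  have hqg_at : HasDerivAt (fun y => q y * (p y + Real.sqrt (1 + p y ^ 2)))
      (deriv q x * (p x + s) + q x * (q x + p x * q x / s)) x :=
    (hq_at x hx).mul (hg_at x hx)
  have hL : HasDerivAt (fun y => deriv (deriv v) (p y + Real.sqrt (1 + p y ^ 2)) *
      (q y * (p y + Real.sqrt (1 + p y ^ 2))))
      ((deriv (deriv (deriv v)) (p x + s) * (q x + p x * q x / s)) * (q x * (p x + s))
        + deriv (deriv v) (p x + s) *
          (deriv q x * (p x + s) + q x * (q x + p x * q x / s))) x :=
    by have h := (((hw2C.differentiable h1top' (p x + s)).hasDerivAt).comp x (hg_at x hx)).mul hqg_at; exact h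
  have hR : HasDerivAt (fun y => -(y * q y * (p y + Real.sqrt (1 + p y ^ 2))) - (1 + p y ^ 2))
      (-((1 * q x + x * deriv q x) * (p x + s) + (x * q x) * (q x + p x * q x / s))
        - (2 * p x ^ 1 * q x)) x := by
    have h1 : HasDerivAt (fun y => y * q y) (1 * q x + x * deriv q x) x :=
      (hasDerivAt_id x).mul (hq_at x hx)
    have h2 := (h1.mul (hg_at x hx)).neg
    have h4 : HasDerivAt (fun y => 1 + p y ^ 2) (2 * p x ^ 1 * q x) x :=
      ((hp_at x hx).pow 2).const_add 1
    exact h2.sub h4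
  have key3 : (deriv (deriv (deriv v)) (p x + s) * (q x + p x * q x / s)) * (q x * (p x + s))
        + deriv (deriv v) (p x + s) *
          (deriv q x * (p x + s) + q x * (q x + p x * q x / s))
      = -((1 * q x + x * deriv q x) * (p x + s) + (x * q x) * (q x + p x * q x / s))
        - (2 * p x ^ 1 * q x) := by
    rw [← hL.deriv, ← hR.deriv]; exact hEq.deriv_eq
  rw [hw3] at key3
  have hBx := hB x hx
  rw [← hs_def] at hBx
  -- eliminate deriv (deriv v) (p x + s)
  have key4 : (-(x * q x * (p x + s)) - (1 + p x ^ 2)) *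
        (deriv q x * (p x + s) + q x * (q x + p x * q x / s))
      = (q x * (p x + s)) *
        (-((1 * q x + x * deriv q x) * (p x + s) + (x * q x) * (q x + p x * q x / s))
          - (2 * p x ^ 1 * q x)) := by
    linear_combination (q x * (p x + s)) * key3
      - (deriv q x * (p x + s) + q x * (q x + p x * q x / s)) * hBx
  -- finish
  have hit3 : iteratedDeriv 3 u x = deriv q x := by
    rw [iteratedDeriv_eq_iterate]; rfl
  have hit2 : iteratedDeriv 2 u x = q x := by
    rw [iteratedDeriv_eq_iterate]; rfl
  rw [hit3, hit2, show (1 : ℝ) + p x ^ 2 = s ^ 2 from hs2.symm]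
  rw [eq_div_iff (by positivity : (s:ℝ) ^ 2 ≠ 0)]
  field_simp at key4
  have key5 : (s * (p x + s)) * (deriv q x * s ^ 2 - 3 * p x * q x ^ 2) = 0 := by
    linear_combination (p x + s) * (deriv q x * s + q x ^ 2) * hs2 - key4
  rcases mul_eq_zero.mp key5 with h | h
  · exact absurd h (mul_ne_zero hsne hgne)
  · linarith
end
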